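/- Let p > 0, h > 0, x₀ ∈ ℝ and i ∈ ℤ, with knots x_j = x₀ + jh. The exponential B-spline φ_i : ℝ → ℝ is twice continuously differentiable on ℝ (i.e. φ_i ∈ C²(ℝ)); in particular its values, first derivatives and second derivatives computed from the adjacent piecewise formulas agree at each of the knots x_{i−2}, x_{i−1}, x_i, x_{i+1}, x_{i+2}. -/

import Mathlib

set_option maxHeartbeats 2000000

open Real Set


/-- The exponential B-spline `φ_i` with parameter `p`, mesh size `h` and knots
`x_j = x₀ + j·h`, defined piecewise on `[x_{i−2}, x_{i+2}]` and zero elsewhere. -/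
noncomputable def expBspline (p h x₀ : ℝ) (i : ℤ) : ℝ → ℝ := fun x =>
  let s := Real.sinh (p * h)
  let c := Real.cosh (p * h)
  let a₁ := p * h * c / (p * h * c - s)
  let b₁ := p / 2 * ((c * (c - 1) + s ^ 2) / ((p * h * c - s) * (1 - c)))
  let b₂ := p / (2 * (p * h * c - s))
  let c₁ := 1 / 4 * ((Real.exp (-(p * h)) * (1 - c) + s * (Real.exp (-(p * h)) - 1)) /
      ((p * h * c - s) * (1 - c)))
  let d₁ := 1 / 4 * ((Real.exp (p * h) * (c - 1) + s * (Real.exp (p * h) - 1)) /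
      ((p * h * c - s) * (1 - c)))
  let X : ℤ → ℝ := fun j => x₀ + (j : ℝ) * h
  if X (i - 2) ≤ x ∧ x ≤ X (i - 1) then
    b₂ * ((X (i - 2) - x) - Real.sinh (p * (X (i - 2) - x)) / p)
  else if X (i - 1) ≤ x ∧ x ≤ X i then
    a₁ + b₁ * (X i - x) + c₁ * Real.exp (p * (X i - x)) + d₁ * Real.exp (-(p * (X i - x)))
  else if X i ≤ x ∧ x ≤ X (i + 1) then
    a₁ + b₁ * (x - X i) + c₁ * Real.exp (p * (x - X i)) + d₁ * Real.exp (-(p * (x - X i)))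
  else if X (i + 1) ≤ x ∧ x ≤ X (i + 2) then
    b₂ * ((x - X (i + 2)) - Real.sinh (p * (x - X (i + 2))) / p)
  else 0

/-! ### The C² kernel -/

noncomputable def bker (p t : ℝ) : ℝ := max t 0 - Real.sinh (p * max t 0) / p
noncomputable def bker1 (p t : ℝ) : ℝ := 1 - Real.cosh (p * max t 0)
noncomputable def bker2 (p t : ℝ) : ℝ := -(p * Real.sinh (p * max t 0))

lemma gder (p : ℝ) (hp : p ≠ 0) (x : ℝ) :
    HasDerivAt (fun y : ℝ => y - Real.sinh (p * y) / p) (1 - Real.cosh (p * x)) x := by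
  have h1 : HasDerivAt (fun y : ℝ => p * y) p x := by
    simpa using (hasDerivAt_id x).const_mul p
  have h2 := ((Real.hasDerivAt_sinh (p * x)).comp x h1).div_const p
  have h3 : HasDerivAt (fun y : ℝ => y - Real.sinh (p * y) / p) (1 - Real.cosh (p * x) * p / p) x :=
    (hasDerivAt_id x).sub h2
  convert h3 using 1
  field_simp

lemma g1der (p : ℝ) (x : ℝ) :
    HasDerivAt (fun y : ℝ => 1 - Real.cosh (p * y)) (-(p * Real.sinh (p * x))) x := by
  have h1 : HasDerivAt (fun y : ℝ => p * y) p x := by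
    simpa using (hasDerivAt_id x).const_mul p
  have h2 := (Real.hasDerivAt_cosh (p * x)).comp x h1
  have h3 : HasDerivAt (fun y : ℝ => 1 - Real.cosh (p * y)) (0 - Real.sinh (p * x) * p) x :=
    (hasDerivAt_const x (1:ℝ)).sub h2
  convert h3 using 1
  ring

lemma bker_hasDerivAt (p : ℝ) (hp : p ≠ 0) (t : ℝ) : HasDerivAt (bker p) (bker1 p t) t := by
  rcases lt_trichotomy t 0 with h | h | h
  · have heq : bker p =ᶠ[nhds t] fun _ => (0:ℝ) :=
      Filter.eventuallyEq_of_mem (Iio_mem_nhds h) (fun x hx => by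
        simp [bker, max_eq_right (le_of_lt (show x < 0 from hx))])
    have := (hasDerivAt_const t (0:ℝ)).congr_of_eventuallyEq heq
    simpa [bker1, max_eq_right h.le] using this
  · subst h
    have hL : HasDerivWithinAt (bker p) 0 (Iic 0) 0 :=
      (hasDerivWithinAt_const 0 (Iic 0) (0:ℝ)).congr
        (fun x hx => by simp [bker, max_eq_right (mem_Iic.mp hx)])
        (by simp [bker])
    have hR : HasDerivWithinAt (bker p) 0 (Ici 0) 0 := by
      have := (gder p hp 0).hasDerivWithinAt (s := Ici 0)
      simp only [mul_zero, Real.cosh_zero, sub_self] at this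
      exact this.congr (fun x hx => by simp [bker, max_eq_left (mem_Ici.mp hx)])
        (by simp [bker])
    have := hL.union hR
    rw [Iic_union_Ici] at this
    have h0 := this.hasDerivAt (by simp)
    simpa [bker1] using h0
  · have heq : bker p =ᶠ[nhds t] fun y => y - Real.sinh (p * y) / p :=
      Filter.eventuallyEq_of_mem (Ioi_mem_nhds h) (fun x hx => by
        simp [bker, max_eq_left (le_of_lt (show (0:ℝ) < x from hx))])
    have := (gder p hp t).congr_of_eventuallyEq heq
    simpa [bker1, max_eq_left h.le] using this

lemma bker1_hasDerivAt (p : ℝ) (t : ℝ) : HasDerivAt (bker1 p) (bker2 p t) t := by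
  rcases lt_trichotomy t 0 with h | h | h
  · have heq : bker1 p =ᶠ[nhds t] fun _ => (0:ℝ) :=
      Filter.eventuallyEq_of_mem (Iio_mem_nhds h) (fun x hx => by
        simp [bker1, max_eq_right (le_of_lt (show x < 0 from hx))])
    have := (hasDerivAt_const t (0:ℝ)).congr_of_eventuallyEq heq
    simpa [bker2, max_eq_right h.le] using this
  · subst h
    have hL : HasDerivWithinAt (bker1 p) 0 (Iic 0) 0 :=
      (hasDerivWithinAt_const 0 (Iic 0) (0:ℝ)).congr
        (fun x hx => by simp [bker1, max_eq_right (mem_Iic.mp hx)])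
        (by simp [bker1])
    have hR : HasDerivWithinAt (bker1 p) 0 (Ici 0) 0 := by
      have := (g1der p 0).hasDerivWithinAt (s := Ici 0)
      simp only [mul_zero, Real.sinh_zero, neg_zero] at this
      exact this.congr (fun x hx => by simp [bker1, max_eq_left (mem_Ici.mp hx)])
        (by simp [bker1])
    have := hL.union hR
    rw [Iic_union_Ici] at this
    have h0 := this.hasDerivAt (by simp)
    simpa [bker2] using h0
  · have heq : bker1 p =ᶠ[nhds t] fun y => 1 - Real.cosh (p * y) :=
      Filter.eventuallyEq_of_mem (Ioi_mem_nhds h) (fun x hx => by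
        simp [bker1, max_eq_left (le_of_lt (show (0:ℝ) < x from hx))])
    have := (g1der p t).congr_of_eventuallyEq heq
    simpa [bker2, max_eq_left h.le] using this

lemma bker2_continuous (p : ℝ) : Continuous (bker2 p) := by
  unfold bker2; fun_prop

lemma bker_contDiff (p : ℝ) (hp : p ≠ 0) : ContDiff ℝ 2 (bker p) := by
  have d0 : deriv (bker p) = bker1 p := funext fun t => (bker_hasDerivAt p hp t).deriv
  have d1 : deriv (bker1 p) = bker2 p := funext fun t => (bker1_hasDerivAt p t).deriv
  rw [show (2 : WithTop ℕ∞) = 1 + 1 from rfl, contDiff_succ_iff_deriv]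
  refine ⟨fun t => (bker_hasDerivAt p hp t).differentiableAt, by simp, ?_⟩
  rw [d0, contDiff_one_iff_deriv]
  exact ⟨fun t => (bker1_hasDerivAt p t).differentiableAt, d1 ▸ bker2_continuous p⟩

lemma bker_of_nonpos (p t : ℝ) (ht : t ≤ 0) : bker p t = 0 := by
  simp [bker, max_eq_right ht]

lemma bker_of_nonneg (p t : ℝ) (ht : 0 ≤ t) : bker p t = t - Real.sinh (p * t) / p := by
  simp [bker, max_eq_left ht]

/-! ### basic inequality -/

lemma sinh_lt_mul_cosh {q : ℝ} (hq : 0 < q) : Real.sinh q < q * Real.cosh q := by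
  have hder : ∀ x : ℝ, HasDerivAt (fun y : ℝ => y * Real.cosh y - Real.sinh y)
      (x * Real.sinh x) x := by
    intro x
    have h1 : HasDerivAt (fun y : ℝ => y * Real.cosh y - Real.sinh y)
        (1 * Real.cosh x + x * Real.sinh x - Real.cosh x) x :=
      ((hasDerivAt_id x).mul (Real.hasDerivAt_cosh x)).sub (Real.hasDerivAt_sinh x)
    convert h1 using 1
    simp [mul_comm]
  have hmono : StrictMonoOn (fun y : ℝ => y * Real.cosh y - Real.sinh y) (Ici 0) := by
    refine strictMonoOn_of_deriv_pos (convex_Ici 0) (by fun_prop) ?_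
    intro x hx
    rw [interior_Ici] at hx
    rw [(hder x).deriv]
    exact mul_pos hx (Real.sinh_pos_iff.mpr hx)
  have h2 := hmono (self_mem_Ici) (le_of_lt hq : (0:ℝ) ≤ q) hq
  simp only [Real.cosh_zero, Real.sinh_zero, mul_one, zero_mul, sub_zero] at h2
  linarith

/-! ### conversion of the coefficients to polynomial form in A = e^{ph} -/

lemma convC (p h A : ℝ) (hA : Real.exp (p*h) = A) : Real.cosh (p*h) = (A^2+1)/(2*A) := by
  have hA0 : A ≠ 0 := hA ▸ Real.exp_ne_zero _
  rw [Real.cosh_eq, Real.exp_neg, hA]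
  field_simp
  try ring

lemma convS (p h A : ℝ) (hA : Real.exp (p*h) = A) : Real.sinh (p*h) = (A^2-1)/(2*A) := by
  have hA0 : A ≠ 0 := hA ▸ Real.exp_ne_zero _
  rw [Real.sinh_eq, Real.exp_neg, hA]
  field_simp
  try ring

lemma convD (p h A : ℝ) (hA : Real.exp (p*h) = A) :
    p*h*Real.cosh (p*h) - Real.sinh (p*h) = (p*h*(A^2+1) - (A^2-1))/(2*A) := by
  have hA0 : A ≠ 0 := hA ▸ Real.exp_ne_zero _
  rw [convC p h A hA, convS p h A hA]
  field_simp
  try ring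

lemma conv1C (p h A : ℝ) (hA : Real.exp (p*h) = A) :
    1 - Real.cosh (p*h) = -((A-1)^2)/(2*A) := by
  have hA0 : A ≠ 0 := hA ▸ Real.exp_ne_zero _
  rw [convC p h A hA]
  field_simp
  try ring

lemma convA1 (p h A : ℝ) (hA : Real.exp (p*h) = A)
    (hP : p*h*(A^2+1) - (A^2-1) ≠ 0) :
    p * h * Real.cosh (p * h) / (p * h * Real.cosh (p * h) - Real.sinh (p * h))
      = p*h*(A^2+1)/(p*h*(A^2+1) - (A^2-1)) := by
  have hA0 : A ≠ 0 := hA ▸ Real.exp_ne_zero _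
  rw [convD p h A hA, convC p h A hA]
  field_simp
  try ring

lemma convB1 (p h A : ℝ) (hA : Real.exp (p*h) = A) (hA1 : A ≠ 1)
    (hP : p*h*(A^2+1) - (A^2-1) ≠ 0) :
    p / 2 * ((Real.cosh (p * h) * (Real.cosh (p * h) - 1) + Real.sinh (p * h) ^ 2) /
        ((p * h * Real.cosh (p * h) - Real.sinh (p * h)) * (1 - Real.cosh (p * h))))
      = -(p*(A^2+A+1))/(p*h*(A^2+1) - (A^2-1)) := by
  have hA0 : A ≠ 0 := hA ▸ Real.exp_ne_zero _
  have hA1' : A - 1 ≠ 0 := sub_ne_zero.mpr hA1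
  rw [convD p h A hA, conv1C p h A hA, convC p h A hA, convS p h A hA]
  field_simp
  try ring

lemma convB2 (p h A : ℝ) (hA : Real.exp (p*h) = A)
    (hP : p*h*(A^2+1) - (A^2-1) ≠ 0) :
    p / (2 * (p * h * Real.cosh (p * h) - Real.sinh (p * h)))
      = p*A/(p*h*(A^2+1) - (A^2-1)) := by
  have hA0 : A ≠ 0 := hA ▸ Real.exp_ne_zero _
  rw [convD p h A hA]
  field_simp
  try ring

lemma convC1 (p h A : ℝ) (hA : Real.exp (p*h) = A) (hA1 : A ≠ 1)
    (hP : p*h*(A^2+1) - (A^2-1) ≠ 0) :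
    1 / 4 * ((Real.exp (-(p * h)) * (1 - Real.cosh (p * h)) +
        Real.sinh (p * h) * (Real.exp (-(p * h)) - 1)) /
        ((p * h * Real.cosh (p * h) - Real.sinh (p * h)) * (1 - Real.cosh (p * h))))
      = (A+2)/(2*(p*h*(A^2+1) - (A^2-1))) := by
  have hA0 : A ≠ 0 := hA ▸ Real.exp_ne_zero _
  have hA1' : A - 1 ≠ 0 := sub_ne_zero.mpr hA1
  rw [Real.exp_neg, hA, convD p h A hA, conv1C p h A hA, convS p h A hA]
  field_simp
  try ring

lemma convD1 (p h A : ℝ) (hA : Real.exp (p*h) = A) (hA1 : A ≠ 1)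
    (hP : p*h*(A^2+1) - (A^2-1) ≠ 0) :
    1 / 4 * ((Real.exp (p * h) * (Real.cosh (p * h) - 1) +
        Real.sinh (p * h) * (Real.exp (p * h) - 1)) /
        ((p * h * Real.cosh (p * h) - Real.sinh (p * h)) * (1 - Real.cosh (p * h))))
      = -(A*(2*A+1))/(2*(p*h*(A^2+1) - (A^2-1))) := by
  have hA0 : A ≠ 0 := hA ▸ Real.exp_ne_zero _
  have hA1' : A - 1 ≠ 0 := sub_ne_zero.mpr hA1
  rw [hA, convD p h A hA, conv1C p h A hA, convC p h A hA, convS p h A hA]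
  field_simp
  try ring

/-! ### region identities -/

lemma setupA (p h : ℝ) (hp : 0 < p) (hh : 0 < h) :
    ∃ A : ℝ, Real.exp (p*h) = A ∧ A ≠ 0 ∧ A ≠ 1 ∧ p*h*(A^2+1) - (A^2-1) ≠ 0 := by
  have hq : 0 < p*h := mul_pos hp hh
  refine ⟨Real.exp (p*h), rfl, Real.exp_ne_zero _, ?_, ?_⟩
  · simpa using ne_of_gt hq
  · have hD : 0 < p*h*Real.cosh (p*h) - Real.sinh (p*h) := sub_pos.mpr (sinh_lt_mul_cosh hq)
    have hconv := convD p h _ rfl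
    rw [hconv] at hD
    intro hcon
    rw [hcon] at hD
    simp at hD

lemma region2 (p h u : ℝ) (hp : 0 < p) (hh : 0 < h) :
    p * h * Real.cosh (p * h) / (p * h * Real.cosh (p * h) - Real.sinh (p * h))
      + (p / 2 * ((Real.cosh (p * h) * (Real.cosh (p * h) - 1) + Real.sinh (p * h) ^ 2) /
          ((p * h * Real.cosh (p * h) - Real.sinh (p * h)) * (1 - Real.cosh (p * h)))))
        * (2*h - u)
      + (1 / 4 * ((Real.exp (-(p * h)) * (1 - Real.cosh (p * h)) +
          Real.sinh (p * h) * (Real.exp (-(p * h)) - 1)) /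
          ((p * h * Real.cosh (p * h) - Real.sinh (p * h)) * (1 - Real.cosh (p * h)))))
        * Real.exp (p * (2*h - u))
      + (1 / 4 * ((Real.exp (p * h) * (Real.cosh (p * h) - 1) +
          Real.sinh (p * h) * (Real.exp (p * h) - 1)) /
          ((p * h * Real.cosh (p * h) - Real.sinh (p * h)) * (1 - Real.cosh (p * h)))))
        * Real.exp (-(p * (2*h - u)))
    = -(p / (2 * (p * h * Real.cosh (p * h) - Real.sinh (p * h)))) * (u - Real.sinh (p * u) / p)
      + (p / (2 * (p * h * Real.cosh (p * h) - Real.sinh (p * h)))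
          - p / 2 * ((Real.cosh (p * h) * (Real.cosh (p * h) - 1) + Real.sinh (p * h) ^ 2) /
          ((p * h * Real.cosh (p * h) - Real.sinh (p * h)) * (1 - Real.cosh (p * h)))))
        * ((u - h) - Real.sinh (p * (u - h)) / p) := by
  obtain ⟨A, hA, hA0, hA1, hP⟩ := setupA p h hp hh
  obtain ⟨E, hE⟩ : ∃ E, Real.exp (p*u) = E := ⟨_, rfl⟩
  have hE0 : E ≠ 0 := hE ▸ Real.exp_ne_zero _
  have hp' : p ≠ 0 := ne_of_gt hp
  rw [convA1 p h A hA hP, convB1 p h A hA hA1 hP, convB2 p h A hA hP,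
      convC1 p h A hA hA1 hP, convD1 p h A hA hA1 hP]
  rw [show p * (2*h - u) = (p*h + p*h) - p*u from by ring,
      show p * (u - h) = p*u - p*h from by ring]
  simp only [Real.sinh_eq, Real.exp_neg, Real.exp_sub, Real.exp_add, hA, hE]
  field_simp
  ring

lemma region3 (p h u : ℝ) (hp : 0 < p) (hh : 0 < h) :
    p * h * Real.cosh (p * h) / (p * h * Real.cosh (p * h) - Real.sinh (p * h))
      + (p / 2 * ((Real.cosh (p * h) * (Real.cosh (p * h) - 1) + Real.sinh (p * h) ^ 2) /
          ((p * h * Real.cosh (p * h) - Real.sinh (p * h)) * (1 - Real.cosh (p * h)))))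
        * (u - 2*h)
      + (1 / 4 * ((Real.exp (-(p * h)) * (1 - Real.cosh (p * h)) +
          Real.sinh (p * h) * (Real.exp (-(p * h)) - 1)) /
          ((p * h * Real.cosh (p * h) - Real.sinh (p * h)) * (1 - Real.cosh (p * h)))))
        * Real.exp (p * (u - 2*h))
      + (1 / 4 * ((Real.exp (p * h) * (Real.cosh (p * h) - 1) +
          Real.sinh (p * h) * (Real.exp (p * h) - 1)) /
          ((p * h * Real.cosh (p * h) - Real.sinh (p * h)) * (1 - Real.cosh (p * h)))))
        * Real.exp (-(p * (u - 2*h)))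
    = -(p / (2 * (p * h * Real.cosh (p * h) - Real.sinh (p * h)))) * (u - Real.sinh (p * u) / p)
      + (p / (2 * (p * h * Real.cosh (p * h) - Real.sinh (p * h)))
          - p / 2 * ((Real.cosh (p * h) * (Real.cosh (p * h) - 1) + Real.sinh (p * h) ^ 2) /
          ((p * h * Real.cosh (p * h) - Real.sinh (p * h)) * (1 - Real.cosh (p * h)))))
        * ((u - h) - Real.sinh (p * (u - h)) / p)
      + (2 * (p / 2 * ((Real.cosh (p * h) * (Real.cosh (p * h) - 1) + Real.sinh (p * h) ^ 2) /
          ((p * h * Real.cosh (p * h) - Real.sinh (p * h)) * (1 - Real.cosh (p * h))))))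
        * ((u - 2*h) - Real.sinh (p * (u - 2*h)) / p) := by
  obtain ⟨A, hA, hA0, hA1, hP⟩ := setupA p h hp hh
  obtain ⟨E, hE⟩ : ∃ E, Real.exp (p*u) = E := ⟨_, rfl⟩
  have hE0 : E ≠ 0 := hE ▸ Real.exp_ne_zero _
  have hp' : p ≠ 0 := ne_of_gt hp
  rw [convA1 p h A hA hP, convB1 p h A hA hA1 hP, convB2 p h A hA hP,
      convC1 p h A hA hA1 hP, convD1 p h A hA hA1 hP]
  rw [show p * (u - 2*h) = p*u - (p*h + p*h) from by ring,
      show p * (u - h) = p*u - p*h from by ring]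
  simp only [Real.sinh_eq, Real.exp_neg, Real.exp_sub, Real.exp_add, hA, hE]
  field_simp
  ring

lemma region4 (p h u : ℝ) (hp : 0 < p) (hh : 0 < h) :
    p / (2 * (p * h * Real.cosh (p * h) - Real.sinh (p * h)))
        * ((u - 4*h) - Real.sinh (p * (u - 4*h)) / p)
    = -(p / (2 * (p * h * Real.cosh (p * h) - Real.sinh (p * h)))) * (u - Real.sinh (p * u) / p)
      + (p / (2 * (p * h * Real.cosh (p * h) - Real.sinh (p * h)))
          - p / 2 * ((Real.cosh (p * h) * (Real.cosh (p * h) - 1) + Real.sinh (p * h) ^ 2) /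
          ((p * h * Real.cosh (p * h) - Real.sinh (p * h)) * (1 - Real.cosh (p * h)))))
        * ((u - h) - Real.sinh (p * (u - h)) / p)
      + (2 * (p / 2 * ((Real.cosh (p * h) * (Real.cosh (p * h) - 1) + Real.sinh (p * h) ^ 2) /
          ((p * h * Real.cosh (p * h) - Real.sinh (p * h)) * (1 - Real.cosh (p * h))))))
        * ((u - 2*h) - Real.sinh (p * (u - 2*h)) / p)
      + (p / (2 * (p * h * Real.cosh (p * h) - Real.sinh (p * h)))
          - p / 2 * ((Real.cosh (p * h) * (Real.cosh (p * h) - 1) + Real.sinh (p * h) ^ 2) /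
          ((p * h * Real.cosh (p * h) - Real.sinh (p * h)) * (1 - Real.cosh (p * h)))))
        * ((u - 3*h) - Real.sinh (p * (u - 3*h)) / p) := by
  obtain ⟨A, hA, hA0, hA1, hP⟩ := setupA p h hp hh
  obtain ⟨E, hE⟩ : ∃ E, Real.exp (p*u) = E := ⟨_, rfl⟩
  have hE0 : E ≠ 0 := hE ▸ Real.exp_ne_zero _
  have hp' : p ≠ 0 := ne_of_gt hp
  rw [convB1 p h A hA hA1 hP, convB2 p h A hA hP]
  rw [show p * (u - 4*h) = p*u - (p*h + p*h + p*h + p*h) from by ring,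
      show p * (u - 3*h) = p*u - (p*h + p*h + p*h) from by ring,
      show p * (u - 2*h) = p*u - (p*h + p*h) from by ring,
      show p * (u - h) = p*u - p*h from by ring]
  simp only [Real.sinh_eq, Real.exp_neg, Real.exp_sub, Real.exp_add, hA, hE]
  field_simp
  ring

lemma region5 (p h u : ℝ) (hp : 0 < p) (hh : 0 < h) :
    (0:ℝ)
    = -(p / (2 * (p * h * Real.cosh (p * h) - Real.sinh (p * h)))) * (u - Real.sinh (p * u) / p)
      + (p / (2 * (p * h * Real.cosh (p * h) - Real.sinh (p * h)))
          - p / 2 * ((Real.cosh (p * h) * (Real.cosh (p * h) - 1) + Real.sinh (p * h) ^ 2) /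
          ((p * h * Real.cosh (p * h) - Real.sinh (p * h)) * (1 - Real.cosh (p * h)))))
        * ((u - h) - Real.sinh (p * (u - h)) / p)
      + (2 * (p / 2 * ((Real.cosh (p * h) * (Real.cosh (p * h) - 1) + Real.sinh (p * h) ^ 2) /
          ((p * h * Real.cosh (p * h) - Real.sinh (p * h)) * (1 - Real.cosh (p * h))))))
        * ((u - 2*h) - Real.sinh (p * (u - 2*h)) / p)
      + (p / (2 * (p * h * Real.cosh (p * h) - Real.sinh (p * h)))
          - p / 2 * ((Real.cosh (p * h) * (Real.cosh (p * h) - 1) + Real.sinh (p * h) ^ 2) /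
          ((p * h * Real.cosh (p * h) - Real.sinh (p * h)) * (1 - Real.cosh (p * h)))))
        * ((u - 3*h) - Real.sinh (p * (u - 3*h)) / p)
      + -(p / (2 * (p * h * Real.cosh (p * h) - Real.sinh (p * h))))
        * ((u - 4*h) - Real.sinh (p * (u - 4*h)) / p) := by
  obtain ⟨A, hA, hA0, hA1, hP⟩ := setupA p h hp hh
  obtain ⟨E, hE⟩ : ∃ E, Real.exp (p*u) = E := ⟨_, rfl⟩
  have hE0 : E ≠ 0 := hE ▸ Real.exp_ne_zero _
  have hp' : p ≠ 0 := ne_of_gt hp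
  rw [convB1 p h A hA hA1 hP, convB2 p h A hA hP]
  rw [show p * (u - 4*h) = p*u - (p*h + p*h + p*h + p*h) from by ring,
      show p * (u - 3*h) = p*u - (p*h + p*h + p*h) from by ring,
      show p * (u - 2*h) = p*u - (p*h + p*h) from by ring,
      show p * (u - h) = p*u - p*h from by ring]
  simp only [Real.sinh_eq, Real.exp_neg, Real.exp_sub, Real.exp_add, hA, hE]
  field_simp
  ring

/-! ### representation of the spline by kernels -/

lemma expBspline_rep (p h x₀ : ℝ) (hp : 0 < p) (hh : 0 < h) (i : ℤ) :
    ∃ a b c : ℝ, expBspline p h x₀ i = fun x =>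
      a * bker p (x - (x₀ + ((i:ℝ) - 2) * h)) + b * bker p (x - (x₀ + ((i:ℝ) - 1) * h))
        + c * bker p (x - (x₀ + (i:ℝ) * h)) + b * bker p (x - (x₀ + ((i:ℝ) + 1) * h))
        + a * bker p (x - (x₀ + ((i:ℝ) + 2) * h)) := by
  refine ⟨-(p / (2 * (p * h * Real.cosh (p * h) - Real.sinh (p * h)))),
    p / (2 * (p * h * Real.cosh (p * h) - Real.sinh (p * h)))
      - p / 2 * ((Real.cosh (p * h) * (Real.cosh (p * h) - 1) + Real.sinh (p * h) ^ 2) /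
          ((p * h * Real.cosh (p * h) - Real.sinh (p * h)) * (1 - Real.cosh (p * h)))),
    2 * (p / 2 * ((Real.cosh (p * h) * (Real.cosh (p * h) - 1) + Real.sinh (p * h) ^ 2) /
          ((p * h * Real.cosh (p * h) - Real.sinh (p * h)) * (1 - Real.cosh (p * h))))), ?_⟩
  funext x
  obtain ⟨u, rfl⟩ : ∃ u, x = x₀ + ((i:ℝ) - 2) * h + u := ⟨x - (x₀ + ((i:ℝ) - 2) * h), by ring⟩
  simp only [expBspline]
  push_cast
  rw [show x₀ + ((i:ℝ) - 2) * h + u - (x₀ + ((i:ℝ) - 2) * h) = u from by ring,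
      show x₀ + ((i:ℝ) - 2) * h + u - (x₀ + ((i:ℝ) - 1) * h) = u - h from by ring,
      show x₀ + ((i:ℝ) - 2) * h + u - (x₀ + (i:ℝ) * h) = u - 2*h from by ring,
      show x₀ + ((i:ℝ) - 2) * h + u - (x₀ + ((i:ℝ) + 1) * h) = u - 3*h from by ring,
      show x₀ + ((i:ℝ) - 2) * h + u - (x₀ + ((i:ℝ) + 2) * h) = u - 4*h from by ring,
      show x₀ + ((i:ℝ) - 2) * h - (x₀ + ((i:ℝ) - 2) * h + u) = -u from by ring,
      show x₀ + (i:ℝ) * h - (x₀ + ((i:ℝ) - 2) * h + u) = 2*h - u from by ring]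
  split_ifs with h1 h2 h3 h4
  · -- u ∈ [0, h]
    have hu0 : 0 ≤ u := by linarith [h1.1]
    have hu1 : u ≤ h := by linarith [h1.2]
    rw [bker_of_nonneg p u hu0, bker_of_nonpos p (u - h) (by linarith),
        bker_of_nonpos p (u - 2*h) (by linarith), bker_of_nonpos p (u - 3*h) (by linarith),
        bker_of_nonpos p (u - 4*h) (by linarith)]
    rw [show p * -u = -(p*u) from by ring, Real.sinh_neg]
    ring
  · -- u ∈ [h, 2h]
    have hu0 : h ≤ u := by linarith [h2.1]
    have hu1 : u ≤ 2*h := by linarith [h2.2]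
    rw [bker_of_nonneg p u (by linarith), bker_of_nonneg p (u - h) (by linarith),
        bker_of_nonpos p (u - 2*h) (by linarith), bker_of_nonpos p (u - 3*h) (by linarith),
        bker_of_nonpos p (u - 4*h) (by linarith)]
    linear_combination region2 p h u hp hh
  · -- u ∈ [2h, 3h]
    have hu0 : 2*h ≤ u := by linarith [h3.1]
    have hu1 : u ≤ 3*h := by linarith [h3.2]
    rw [bker_of_nonneg p u (by linarith), bker_of_nonneg p (u - h) (by linarith),
        bker_of_nonneg p (u - 2*h) (by linarith), bker_of_nonpos p (u - 3*h) (by linarith),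
        bker_of_nonpos p (u - 4*h) (by linarith)]
    linear_combination region3 p h u hp hh
  · -- u ∈ [3h, 4h]
    have hu0 : 3*h ≤ u := by linarith [h4.1]
    have hu1 : u ≤ 4*h := by linarith [h4.2]
    rw [bker_of_nonneg p u (by linarith), bker_of_nonneg p (u - h) (by linarith),
        bker_of_nonneg p (u - 2*h) (by linarith), bker_of_nonneg p (u - 3*h) (by linarith),
        bker_of_nonpos p (u - 4*h) (by linarith)]
    linear_combination region4 p h u hp hh
  · -- outside
    rcases lt_or_ge u 0 with hu | hu
    · rw [bker_of_nonpos p u (by linarith), bker_of_nonpos p (u - h) (by linarith),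
          bker_of_nonpos p (u - 2*h) (by linarith), bker_of_nonpos p (u - 3*h) (by linarith),
          bker_of_nonpos p (u - 4*h) (by linarith)]
      ring
    · have hb1 : ¬ u ≤ h := fun hc => h1 ⟨by linarith, by linarith⟩
      have hb2 : ¬ u ≤ 2*h := fun hc => h2 ⟨by linarith, by linarith⟩
      have hb3 : ¬ u ≤ 3*h := fun hc => h3 ⟨by linarith, by linarith⟩
      have hb4 : ¬ u ≤ 4*h := fun hc => h4 ⟨by linarith, by linarith⟩
      push_neg at hb4
      rw [bker_of_nonneg p u (by linarith), bker_of_nonneg p (u - h) (by linarith),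
          bker_of_nonneg p (u - 2*h) (by linarith), bker_of_nonneg p (u - 3*h) (by linarith),
          bker_of_nonneg p (u - 4*h) (by linarith)]
      linear_combination region5 p h u hp hh

/-- The exponential B-spline `φ_i` is twice continuously differentiable on `ℝ`;
in particular the values, first derivatives and second derivatives of the adjacent
piecewise formulas agree at each of the knots `x_{i−2}, …, x_{i+2}`. -/
theorem expBspline_contDiff_two (p h x₀ : ℝ) (hp : 0 < p) (hh : 0 < h) (i : ℤ) :
    ContDiff ℝ 2 (expBspline p h x₀ i) := by
  obtain ⟨a, b, c, hrep⟩ := expBspline_rep p h x₀ hp hh i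
  rw [hrep]
  have hk := bker_contDiff p (ne_of_gt hp)
  have base : ∀ k : ℝ, ContDiff ℝ 2 (fun x : ℝ => bker p (x - k)) := fun k =>
    hk.comp (contDiff_id.sub contDiff_const)
  exact ((((contDiff_const.mul (base _)).add (contDiff_const.mul (base _))).add
    (contDiff_const.mul (base _))).add (contDiff_const.mul (base _))).add
    (contDiff_const.mul (base _))
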